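/- If T: E → F is an almost interval preserving operator between Banach lattices and A is an almost Dunford-Pettis subset of E, then T(A) is an almost Dunford-Pettis subset of F. -/

import Mathlib

open Filter Topology Pointwise

variable {E F G X : Type*}

section Defs

variable [NormedAddCommGroup E] [Lattice E] [HasSolidNorm E] [IsOrderedAddMonoid E] [NormedSpace ℝ E]

/-- `|f|` of a functional evaluated at `x ≥ 0`: `sup {f y : |y| ≤ x}`. -/
noncomputable def absEval (f : E →L[ℝ] ℝ) (x : E) : ℝ :=
  ⨆ y : {y : E // |y| ≤ x}, f y.1

/-- `|f| ⊓ |g| = 0` in the dual lattice, via the Riesz-Kantorovich formula. -/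
def DisjointPair (f g : E →L[ℝ] ℝ) : Prop :=
  ∀ x : E, 0 ≤ x →
    (⨅ y : {y : E // 0 ≤ y ∧ y ≤ x}, (absEval f y.1 + absEval g (x - y.1))) = 0

/-- A pairwise disjoint sequence of functionals. -/
def DisjointSeqDual (f : ℕ → E →L[ℝ] ℝ) : Prop :=
  ∀ n m, n ≠ m → DisjointPair (f n) (f m)

/-- A weakly null sequence in a normed space. -/
def WeaklyNullSeq {Y : Type*} [NormedAddCommGroup Y] [NormedSpace ℝ Y] (y : ℕ → Y) : Prop :=
  ∀ φ : Y →L[ℝ] ℝ, Tendsto (fun n => φ (y n)) atTop (𝓝 0)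

/-- An almost Dunford-Pettis set: disjoint weakly null sequences in the dual converge
uniformly to zero on it. -/
def AlmostDPSet (A : Set E) : Prop :=
  ∀ f : ℕ → E →L[ℝ] ℝ, DisjointSeqDual f → WeaklyNullSeq f →
    Tendsto (fun n => ⨆ a : A, |f n a.1|) atTop (𝓝 0)

end Defs

variable [NormedAddCommGroup E] [Lattice E] [HasSolidNorm E] [IsOrderedAddMonoid E] [NormedSpace ℝ E]
  [NormedAddCommGroup F] [Lattice F] [HasSolidNorm F] [IsOrderedAddMonoid F] [NormedSpace ℝ F] in
/-- An almost interval preserving operator: positive, with `T[0,x]` dense in `[0,Tx]`. -/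
def AlmostIntervalPreserving (T : E →L[ℝ] F) : Prop :=
  (∀ x : E, 0 ≤ x → 0 ≤ T x) ∧
    ∀ x : E, 0 ≤ x → Set.Icc (0 : F) (T x) ⊆ closure (T '' Set.Icc 0 x)

section Aux

variable [NormedAddCommGroup E] [Lattice E] [HasSolidNorm E] [IsOrderedAddMonoid E] [NormedSpace ℝ E]
  [NormedAddCommGroup F] [Lattice F] [HasSolidNorm F] [IsOrderedAddMonoid F] [NormedSpace ℝ F]

lemma absEval_bddAbove (f : E →L[ℝ] ℝ) (x : E) :
    BddAbove (Set.range fun y : {y : E // |y| ≤ x} => f y.1) := by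
  refine ⟨‖f‖ * ‖x‖, ?_⟩
  rintro r ⟨⟨y, hy⟩, rfl⟩
  calc f y ≤ |f y| := le_abs_self _
    _ ≤ ‖f‖ * ‖y‖ := f.le_opNorm y
    _ ≤ ‖f‖ * ‖x‖ := by
        refine mul_le_mul_of_nonneg_left ?_ (norm_nonneg f)
        exact norm_le_norm_of_abs_le_abs (hy.trans (le_abs_self x))

lemma absEval_nonneg (f : E →L[ℝ] ℝ) {x : E} (hx : 0 ≤ x) : 0 ≤ absEval f x := by
  have h0 : (0 : ℝ) = f (0 : E) := by simp
  rw [h0]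
  exact le_ciSup (absEval_bddAbove f x) ⟨0, by simpa using hx⟩

lemma absEval_lipschitz (f : E →L[ℝ] ℝ) {u v : E} (hu : 0 ≤ u) (hv : 0 ≤ v) :
    absEval f u ≤ absEval f v + 2 * ‖f‖ * ‖u - v‖ := by
  haveI : Nonempty {y : E // |y| ≤ u} := ⟨⟨0, by simpa using hu⟩⟩
  refine ciSup_le ?_
  rintro ⟨y, hy⟩
  set y' : E := (y ⊓ v) ⊔ (-v) with hy'
  have hy'le : |y'| ≤ v := by
    rw [abs_le']
    refine ⟨sup_le inf_le_right (neg_le_self hv), ?_⟩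
    rw [neg_le]
    exact neg_le_of_neg_le (neg_le.mp le_sup_right)
  have hyup : y ≤ u := (le_abs_self y).trans hy
  have hylo : -u ≤ y := neg_le_of_neg_le ((neg_le_abs y).trans hy)
  have hyeq : y = (y ⊓ u) ⊔ (-u) := by
    rw [inf_eq_left.mpr hyup, sup_eq_left.mpr hylo]
  have hdist : ‖y - y'‖ ≤ 2 * ‖u - v‖ := by
    calc ‖y - y'‖ = ‖(y ⊓ u) ⊔ (-u) - (y ⊓ v) ⊔ (-v)‖ := by rw [← hyeq, hy']
      _ ≤ ‖y ⊓ u - y ⊓ v‖ + ‖-u - -v‖ := norm_sup_sub_sup_le_add_norm _ _ _ _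
      _ ≤ (‖y - y‖ + ‖u - v‖) + ‖u - v‖ := by
          gcongr
          · exact norm_inf_sub_inf_le_add_norm _ _ _ _
          · rw [show -u - -v = -(u - v) by abel, norm_neg]
      _ = 2 * ‖u - v‖ := by simp; ring
  have h1 : f y' ≤ absEval f v := le_ciSup (absEval_bddAbove f v) ⟨y', hy'le⟩
  have h2 : f (y - y') ≤ ‖f‖ * (2 * ‖u - v‖) := by
    calc f (y - y') ≤ |f (y - y')| := le_abs_self _
      _ ≤ ‖f‖ * ‖y - y'‖ := f.le_opNorm _
      _ ≤ ‖f‖ * (2 * ‖u - v‖) := by gcongr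
  have hsplit : f y = f y' + f (y - y') := by rw [← map_add]; congr 1; abel
  rw [hsplit]
  calc f y' + f (y - y') ≤ absEval f v + ‖f‖ * (2 * ‖u - v‖) := add_le_add h1 h2
    _ = absEval f v + 2 * ‖f‖ * ‖u - v‖ := by ring

lemma T_monotone (T : E →L[ℝ] F) (hT : ∀ x : E, 0 ≤ x → 0 ≤ T x)
    {a b : E} (h : a ≤ b) : T a ≤ T b := by
  have h2 := hT (b - a) (sub_nonneg.mpr h)
  rw [map_sub] at h2
  exact sub_nonneg.mp h2

lemma absEval_comp_le (T : E →L[ℝ] F) (hT : ∀ x : E, 0 ≤ x → 0 ≤ T x)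
    (f : F →L[ℝ] ℝ) {y : E} (hy : 0 ≤ y) :
    absEval (f.comp T) y ≤ absEval f (T y) := by
  haveI : Nonempty {z : E // |z| ≤ y} := ⟨⟨0, by simpa using hy⟩⟩
  refine ciSup_le ?_
  rintro ⟨z, hz⟩
  have hTz : |T z| ≤ T y := by
    rw [abs_le']
    refine ⟨T_monotone T hT ((le_abs_self z).trans hz), ?_⟩
    have := T_monotone T hT ((neg_le_abs z).trans hz : -z ≤ y)
    rwa [map_neg] at this
  exact le_ciSup (absEval_bddAbove f (T y)) ⟨T z, hTz⟩

lemma comp_disjointPair (T : E →L[ℝ] F) (hT : AlmostIntervalPreserving T)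
    {f g : F →L[ℝ] ℝ} (hfg : DisjointPair f g) :
    DisjointPair (f.comp T) (g.comp T) := by
  intro x hx
  have hne : Nonempty {y : E // 0 ≤ y ∧ y ≤ x} := ⟨⟨0, le_refl 0, hx⟩⟩
  have hbdd : BddBelow (Set.range fun y : {y : E // 0 ≤ y ∧ y ≤ x} =>
      absEval (f.comp T) y.1 + absEval (g.comp T) (x - y.1)) := by
    refine ⟨0, ?_⟩
    rintro r ⟨⟨y, hy0, hyx⟩, rfl⟩
    exact add_nonneg (absEval_nonneg _ hy0) (absEval_nonneg _ (sub_nonneg.mpr hyx))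
  refine le_antisymm ?_ (le_ciInf fun ⟨y, hy0, hyx⟩ =>
    add_nonneg (absEval_nonneg _ hy0) (absEval_nonneg _ (sub_nonneg.mpr hyx)))
  refine le_of_forall_gt_imp_ge_of_dense fun ε hε => ?_
  -- use disjointness of f, g at T x
  have hTx : (0:F) ≤ T x := hT.1 x hx
  haveI : Nonempty {y : F // 0 ≤ y ∧ y ≤ T x} := ⟨⟨0, le_refl 0, hTx⟩⟩
  have hinf := hfg (T x) hTx
  have : (⨅ y : {y : F // 0 ≤ y ∧ y ≤ T x}, (absEval f y.1 + absEval g (T x - y.1))) < ε / 2 := by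
    rw [hinf]; linarith
  obtain ⟨⟨w, hw0, hwTx⟩, hw⟩ := exists_lt_of_ciInf_lt this
  -- density
  set δ : ℝ := ε / (4 * (‖f‖ + ‖g‖ + 1)) with hδdef
  have hden : (0:ℝ) < 4 * (‖f‖ + ‖g‖ + 1) := by positivity
  have hδ : 0 < δ := by positivity
  have hwcl : w ∈ closure (T '' Set.Icc 0 x) := hT.2 x hx ⟨hw0, hwTx⟩
  obtain ⟨w', hw'mem, hw'dist⟩ := Metric.mem_closure_iff.mp hwcl δ hδ
  obtain ⟨z, ⟨hz0, hzx⟩, rfl⟩ := hw'mem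
  have hdist : ‖T z - w‖ < δ := by
    rw [dist_eq_norm] at hw'dist
    rw [← norm_neg]
    simpa [neg_sub] using hw'dist
  -- estimate at z
  have hTz0 : (0:F) ≤ T z := hT.1 z hz0
  have hTxz0 : (0:F) ≤ T x - T z := sub_nonneg.mpr (T_monotone T hT.1 hzx)
  have e1 : absEval (f.comp T) z ≤ absEval f w + 2 * ‖f‖ * ‖T z - w‖ :=
    (absEval_comp_le T hT.1 f hz0).trans (absEval_lipschitz f hTz0 hw0)
  have e2 : absEval (g.comp T) (x - z) ≤ absEval g (T x - w) + 2 * ‖g‖ * ‖T z - w‖ := by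
    have h1 : absEval (g.comp T) (x - z) ≤ absEval g (T (x - z)) :=
      absEval_comp_le T hT.1 g (sub_nonneg.mpr hzx)
    have h2 : absEval g (T (x - z)) ≤ absEval g (T x - w) + 2 * ‖g‖ * ‖T (x - z) - (T x - w)‖ :=
      absEval_lipschitz g (by rwa [map_sub]) (sub_nonneg.mpr hwTx)
    have h3 : T (x - z) - (T x - w) = -(T z - w) := by rw [map_sub]; abel
    rw [h3, norm_neg] at h2
    exact h1.trans h2
  have key : absEval (f.comp T) z + absEval (g.comp T) (x - z) ≤ ε := by
    have hnd : 2 * (‖f‖ + ‖g‖) * δ ≤ ε / 2 := by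
      rw [hδdef, ← mul_div_assoc, div_le_div_iff₀ hden (by norm_num : (0:ℝ) < 2)]
      nlinarith [norm_nonneg f, norm_nonneg g, le_of_lt hε]
    have hfd : 2 * ‖f‖ * ‖T z - w‖ + 2 * ‖g‖ * ‖T z - w‖ ≤ 2 * (‖f‖ + ‖g‖) * δ := by
      have := hdist.le
      nlinarith [norm_nonneg f, norm_nonneg g, norm_nonneg (T z - w)]
    linarith [e1, e2, hw]
  exact le_trans (ciInf_le hbdd ⟨z, hz0, hzx⟩) key

end Aux

/-- Almost interval preserving operators map almost Dunford-Pettis sets to almost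
Dunford-Pettis sets. -/
theorem almostIntervalPreserving_image_almostDP [NormedAddCommGroup E] [Lattice E] [HasSolidNorm E] [IsOrderedAddMonoid E] [NormedSpace ℝ E] [PosSMulStrictMono ℝ E] [PosSMulReflectLT ℝ E] [CompleteSpace E] [NormedAddCommGroup F] [Lattice F] [HasSolidNorm F] [IsOrderedAddMonoid F] [NormedSpace ℝ F] [PosSMulStrictMono ℝ F] [PosSMulReflectLT ℝ F] [CompleteSpace F]
    (T : E →L[ℝ] F) (hT : AlmostIntervalPreserving T)
    (A : Set E) (hA : AlmostDPSet A) : AlmostDPSet (T '' A) := by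
  intro f hfd hfw
  set g : ℕ → E →L[ℝ] ℝ := fun n => (f n).comp T with hg
  have hgd : DisjointSeqDual g := fun n m hnm => comp_disjointPair T hT (hfd n m hnm)
  have hgw : WeaklyNullSeq g := by
    intro φ
    have := hfw (φ.comp ((ContinuousLinearMap.compL ℝ E F ℝ).flip T))
    simpa using this
  have h := hA g hgd hgw
  have heq : ∀ n, (⨆ b : (T '' A), |f n b.1|) = ⨆ a : A, |g n a.1| := by
    intro n
    rw [iSup, iSup]
    congr 1
    ext r
    constructor
    · rintro ⟨⟨b, a, ha, rfl⟩, rfl⟩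
      exact ⟨⟨a, ha⟩, rfl⟩
    · rintro ⟨⟨a, ha⟩, rfl⟩
      exact ⟨⟨T a, a, ha, rfl⟩, rfl⟩
  simpa only [heq] using h
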